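/- Let f_n(t), n ≥ 1, be the ℕ×ℕ matrices over ℤ[t] given by the block-diagonal matrix with identity in the first 2n−2 coordinates, a fixed matrix M(t) ∈ Sp_4(ℤ[t]) with M(0) = I and M(1) the block swap in coordinates 2n−1,…,2n+2, and identity beyond. Then the infinite product F(t) = f_1(t) f_2(t) f_3(t) ⋯ is well-defined (the first 2n columns of f_1⋯f_N are independent of N for N ≥ n), each column of F(t) has finitely many nonzero entries, F(0) is the identity, and F(1) is the shift operator sending the standard basis vector e_k to e_{k+2}. -/

import Mathlib

open Matrix

noncomputable section

/-- The standard symplectic form `ω₄` as a matrix over `ℤ[t]`. -/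
def om4 : Matrix (Fin 4) (Fin 4) (Polynomial ℤ) :=
  !![0, 1, 0, 0; -1, 0, 0, 0; 0, 0, 0, 1; 0, 0, -1, 0]

/-- The block permutation matrix exchanging the two standard 2×2 symplectic blocks. -/
def swapZ : Matrix (Fin 4) (Fin 4) ℤ :=
  !![0, 0, 1, 0; 0, 0, 0, 1; 1, 0, 0, 0; 0, 1, 0, 0]

/-- The `ℕ×ℕ` matrix `f_{n+1}(t)`: identity except for a copy of `M(t)` in the 4×4 block
with rows and columns `2n, 2n+1, 2n+2, 2n+3` (i.e. coordinates `2n−1,…,2n+2` in the paper's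
1-based indexing for `f_n`). -/
def fm (M : Matrix (Fin 4) (Fin 4) (Polynomial ℤ)) (n i j : ℕ) : Polynomial ℤ :=
  if h : 2 * n ≤ i ∧ i < 2 * n + 4 ∧ 2 * n ≤ j ∧ j < 2 * n + 4 then
    M ⟨i - 2 * n, by omega⟩ ⟨j - 2 * n, by omega⟩
  else if i = j then 1 else 0

/-- The partial product `f_1(t) f_2(t) ⋯ f_N(t)`, formed entrywise (rows and columns have
finite support, so the finite sums `∑ᶠ` compute the matrix product). -/
def pprod (M : Matrix (Fin 4) (Fin 4) (Polynomial ℤ)) : ℕ → ℕ → ℕ → Polynomial ℤ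
  | 0 => fun i j => if i = j then 1 else 0
  | (N + 1) => fun i j => ∑ᶠ k : ℕ, pprod M N i k * fm M N k j

/-- The infinite product `F(t) = f_1(t) f_2(t) f_3(t) ⋯`: entry `(i,j)` is computed from any
sufficiently long partial product. -/
def bigF (M : Matrix (Fin 4) (Fin 4) (Polynomial ℤ)) (i j : ℕ) : Polynomial ℤ :=
  pprod M (j / 2 + 1) i j

-- auxiliary lemmas


lemma fm_col (M : Matrix (Fin 4) (Fin 4) (Polynomial ℤ)) (N k j : ℕ)
    (hj : ¬ (2 * N ≤ j ∧ j < 2 * N + 4)) : fm M N k j = if k = j then 1 else 0 := by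
  rw [fm, dif_neg (by omega)]

lemma fm_row (M : Matrix (Fin 4) (Fin 4) (Polynomial ℤ)) (N k j : ℕ)
    (hk : ¬ (2 * N ≤ k ∧ k < 2 * N + 4)) : fm M N k j = if k = j then 1 else 0 := by
  rw [fm, dif_neg (by omega)]

lemma pprod_succ (M : Matrix (Fin 4) (Fin 4) (Polynomial ℤ)) (N i j : ℕ) :
    pprod M (N + 1) i j
      = ∑ k ∈ insert j (Finset.Ico (2 * N) (2 * N + 4)), pprod M N i k * fm M N k j := by
  rw [show pprod M (N + 1) i j = ∑ᶠ k : ℕ, pprod M N i k * fm M N k j from rfl]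
  apply finsum_eq_finset_sum_of_support_subset
  intro k hk
  simp only [Function.mem_support] at hk
  simp only [Finset.coe_insert, Finset.coe_Ico, Set.mem_insert_iff, Set.mem_Ico]
  by_contra h
  push_neg at h
  obtain ⟨h1, h2⟩ := h
  apply hk
  rw [fm_row M N k j (by omega), if_neg h1, mul_zero]

lemma pprod_stable (M : Matrix (Fin 4) (Fin 4) (Polynomial ℤ)) (n N : ℕ) (h : n ≤ N)
    (i j : ℕ) (hj : j < 2 * n) : pprod M N i j = pprod M n i j := by
  induction N, h using Nat.le_induction with
  | base => rfl
  | succ N hN ih =>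
    rw [pprod_succ, ← ih]
    rw [Finset.sum_insert (by simp only [Finset.mem_Ico]; omega)]
    rw [fm_col M N j j (by omega), if_pos rfl, mul_one]
    rw [Finset.sum_eq_zero, add_zero]
    intro k hk
    simp only [Finset.mem_Ico] at hk
    rw [fm_col M N k j (by omega), if_neg (by omega), mul_zero]

lemma pprod_row (M : Matrix (Fin 4) (Fin 4) (Polynomial ℤ)) :
    ∀ N i j : ℕ, 2 * N + 2 ≤ i → pprod M N i j = if i = j then 1 else 0 := by
  intro N
  induction N with
  | zero => intro i j _; rfl
  | succ N ih =>
    intro i j hi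
    rw [pprod_succ]
    rw [Finset.sum_congr rfl (fun k _ => by
      rw [ih i k (by omega), ite_mul, one_mul, zero_mul])]
    rw [Finset.sum_ite_eq]
    by_cases h : i = j
    · subst h
      rw [if_pos (Finset.mem_insert_self _ _), fm_row M N i i (by omega), if_pos rfl]
    · rw [fm_row M N i j (by omega), if_neg h, ite_self]

lemma col_finite (M : Matrix (Fin 4) (Fin 4) (Polynomial ℤ)) (N j : ℕ) :
    {i | pprod M N i j ≠ 0}.Finite := by
  apply Set.Finite.subset ((Set.finite_Iio (2 * N + 2)).union (Set.finite_singleton j))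
  intro i hi
  simp only [Set.mem_setOf_eq] at hi
  simp only [Set.mem_union, Set.mem_Iio, Set.mem_singleton_iff]
  by_contra h
  push_neg at h
  exact hi (by rw [pprod_row M N i j (by omega), if_neg h.2])

lemma eval_pprod_succ (M : Matrix (Fin 4) (Fin 4) (Polynomial ℤ)) (x : ℤ) (N i j : ℕ) :
    (pprod M (N + 1) i j).eval x
      = ∑ k ∈ insert j (Finset.Ico (2 * N) (2 * N + 4)),
          (pprod M N i k).eval x * (fm M N k j).eval x := by
  rw [pprod_succ, Polynomial.eval_finset_sum]
  exact Finset.sum_congr rfl fun k _ => Polynomial.eval_mul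

lemma fm_eval0 (M : Matrix (Fin 4) (Fin 4) (Polynomial ℤ))
    (h0 : M.map (Polynomial.eval 0) = 1) (N k j : ℕ) :
    (fm M N k j).eval 0 = if k = j then 1 else 0 := by
  rw [fm]
  split
  · rename_i h
    have key : ∀ a b : Fin 4, (M a b).eval 0 = (1 : Matrix (Fin 4) (Fin 4) ℤ) a b := by
      intro a b
      rw [← Matrix.map_apply (f := Polynomial.eval 0), h0]
    rw [key, Matrix.one_apply]
    by_cases hkj : k = j
    · rw [if_pos hkj, if_pos (by subst hkj; rfl)]
    · rw [if_neg hkj, if_neg]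
      intro hcon
      apply hkj
      have := congrArg Fin.val hcon
      simp only at this
      omega
  · split <;> simp

lemma pprod_eval0 (M : Matrix (Fin 4) (Fin 4) (Polynomial ℤ))
    (h0 : M.map (Polynomial.eval 0) = 1) :
    ∀ N i j : ℕ, (pprod M N i j).eval 0 = if i = j then 1 else 0 := by
  intro N
  induction N with
  | zero => intro i j; show (if i = j then (1 : Polynomial ℤ) else 0).eval 0 = _; split <;> simp
  | succ N ih =>
    intro i j
    rw [eval_pprod_succ]
    rw [Finset.sum_congr rfl (fun k _ => by
      rw [ih, fm_eval0 M h0, ite_mul, one_mul, zero_mul])]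
    rw [Finset.sum_ite_eq]
    by_cases h : i = j
    · subst h
      rw [if_pos (Finset.mem_insert_self _ _), if_pos rfl]
    · rw [if_neg h, ite_self]

def qf (N i j : ℕ) : ℤ :=
  if j < 2 * N then (if i = j + 2 then 1 else 0)
  else if j < 2 * N + 2 then (if i = j - 2 * N then 1 else 0)
  else (if i = j then 1 else 0)

lemma swap_entry : ∀ a b : Fin 4, swapZ a b = if (a : ℕ) = ((b : ℕ) + 2) % 4 then 1 else 0 := by
  intro a b; fin_cases a <;> fin_cases b <;> rfl

lemma sum_delta {g : ℕ → ℤ} {s : Finset ℕ} {k₀ : ℕ} (hk₀ : k₀ ∈ s) :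
    (∑ k ∈ s, g k * (if k = k₀ then 1 else 0)) = g k₀ := by
  simp only [mul_ite, mul_one, mul_zero]
  rw [Finset.sum_ite_eq' s k₀ g, if_pos hk₀]

lemma fm_eval1_block (M : Matrix (Fin 4) (Fin 4) (Polynomial ℤ))
    (h1 : M.map (Polynomial.eval 1) = swapZ) (N k j : ℕ)
    (hj : 2 * N ≤ j ∧ j < 2 * N + 4) :
    (fm M N k j).eval 1 = if k = 2 * N + ((j - 2 * N) + 2) % 4 then 1 else 0 := by
  have hmod : ((j - 2 * N) + 2) % 4 < 4 := Nat.mod_lt _ (by omega)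
  by_cases hk : 2 * N ≤ k ∧ k < 2 * N + 4
  · rw [fm, dif_pos ⟨hk.1, hk.2, hj.1, hj.2⟩]
    have key : ∀ a b : Fin 4, (M a b).eval 1 = swapZ a b := by
      intro a b
      rw [← Matrix.map_apply (f := Polynomial.eval 1), h1]
    rw [key, swap_entry]
    refine if_congr ?_ rfl rfl
    show k - 2 * N = ((j - 2 * N) + 2) % 4 ↔ k = 2 * N + ((j - 2 * N) + 2) % 4
    omega
  · rw [fm_row M N k j hk, apply_ite (Polynomial.eval 1), Polynomial.eval_one,
      Polynomial.eval_zero, if_neg (by omega), if_neg (by omega)]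

lemma pprod_eval1 (M : Matrix (Fin 4) (Fin 4) (Polynomial ℤ))
    (h1 : M.map (Polynomial.eval 1) = swapZ) :
    ∀ N i j : ℕ, (pprod M N i j).eval 1 = qf N i j := by
  intro N
  induction N with
  | zero =>
    intro i j
    show (if i = j then (1 : Polynomial ℤ) else 0).eval 1 = qf 0 i j
    rw [apply_ite (Polynomial.eval 1), Polynomial.eval_one, Polynomial.eval_zero]
    simp only [qf]
    split_ifs <;> omega
  | succ N ih =>
    intro i j
    rw [eval_pprod_succ]
    by_cases hj : 2 * N ≤ j ∧ j < 2 * N + 4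
    · -- j in the active block
      rw [Finset.sum_congr rfl (fun k _ => by rw [ih, fm_eval1_block M h1 N k j hj])]
      by_cases hj2 : j < 2 * N + 2
      · rw [show 2 * N + ((j - 2 * N) + 2) % 4 = j + 2 from by omega]
        rw [sum_delta (Finset.mem_insert_of_mem (Finset.mem_Ico.mpr ⟨by omega, by omega⟩))]
        simp only [qf]
        split_ifs <;> omega
      · rw [show 2 * N + ((j - 2 * N) + 2) % 4 = j - 2 from by omega]
        rw [sum_delta (Finset.mem_insert_of_mem (Finset.mem_Ico.mpr ⟨by omega, by omega⟩))]
        simp only [qf]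
        split_ifs <;> omega
    · -- j outside the block: column unchanged
      rw [Finset.sum_congr rfl (fun k _ => by
        rw [ih, fm_col M N k j hj, apply_ite (Polynomial.eval 1), Polynomial.eval_one,
          Polynomial.eval_zero])]
      rw [sum_delta (Finset.mem_insert_self _ _)]
      simp only [qf]
      split_ifs <;> omega

/-- Given `M(t) ∈ Sp₄(ℤ[t])` with `M(0) = I` and `M(1)` the block swap, the infinite product
`F(t) = f_1(t) f_2(t) ⋯` is well-defined (the first `2n` columns of `f_1 ⋯ f_N` are
independent of `N` for `N ≥ n`), each column of `F(t)` has finitely many nonzero entries,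
`F(0)` is the identity, and `F(1)` is the shift operator sending `e_k ↦ e_{k+2}`. -/
theorem stmt18 (M : Matrix (Fin 4) (Fin 4) (Polynomial ℤ))
    (hsymp : Mᵀ * om4 * M = om4)
    (h0 : M.map (Polynomial.eval 0) = 1)
    (h1 : M.map (Polynomial.eval 1) = swapZ) :
    (∀ n N, n ≤ N → ∀ i j, j < 2 * n → pprod M N i j = pprod M n i j) ∧
    (∀ j, {i | bigF M i j ≠ 0}.Finite) ∧
    (∀ i j, (bigF M i j).eval 0 = if i = j then 1 else 0) ∧
    (∀ i j, (bigF M i j).eval 1 = if i = j + 2 then 1 else 0) := by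
  refine ⟨fun n N hnN i j hj => pprod_stable M n N hnN i j hj,
    fun j => col_finite M (j / 2 + 1) j,
    fun i j => pprod_eval0 M h0 (j / 2 + 1) i j,
    fun i j => ?_⟩
  rw [bigF, pprod_eval1 M h1]
  simp only [qf]
  split_ifs <;> omega

end
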